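/- Let n ≥ 1, let ρ̂ be a density matrix on ℂⁿ and let Π be an orthogonal projection (a Hermitian idempotent n×n matrix). Set ε' := Tr((𝟙 − Π) ρ̂), assume ε' < 1, and define ρ := Π ρ̂ Π / (1 − ε') and c := Π ρ̂ (𝟙 − Π). Then the trace-norm distance satisfies ‖ ρ̂ − ρ ‖_Tr ≤ 2·‖c‖_Tr + 2·ε'. -/

import Mathlib

open scoped ComplexOrder

/-- The trace norm `‖c‖_Tr = Tr √(c cᴴ)` of a complex square matrix. -/
noncomputable def traceNorm {m : Type*} [Fintype m] [DecidableEq m]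
    (c : Matrix m m ℂ) : ℝ :=
  (((Matrix.posSemidef_self_mul_conjTranspose c).1.eigenvectorUnitary.1 *
      Matrix.diagonal (((↑) : ℝ → ℂ) ∘ (√·) ∘ (Matrix.posSemidef_self_mul_conjTranspose c).1.eigenvalues) *
      (star (Matrix.posSemidef_self_mul_conjTranspose c).1.eigenvectorUnitary : Matrix m m ℂ)).trace).re

open Matrix

variable {m : Type*} [Fintype m] [DecidableEq m]

open scoped MatrixOrder

noncomputable def Matrix.PosSemidef.sqrt {A : Matrix m m ℂ} (_hA : A.PosSemidef) :
    Matrix m m ℂ := CFC.sqrt A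

lemma Matrix.PosSemidef.posSemidef_sqrt {A : Matrix m m ℂ} (hA : A.PosSemidef) :
    hA.sqrt.PosSemidef := (CFC.sqrt_nonneg A).posSemidef

lemma Matrix.PosSemidef.sq_sqrt {A : Matrix m m ℂ} (hA : A.PosSemidef) :
    hA.sqrt ^ 2 = A := CFC.sq_sqrt A hA.nonneg

lemma Matrix.PosSemidef.eq_sqrt_of_sq_eq {S B : Matrix m m ℂ} (hS : S.PosSemidef)
    (hB : B.PosSemidef) (h : S ^ 2 = B) : S = hB.sqrt :=
  (CFC.sqrt_unique (by rw [← sq]; exact h) hS.nonneg).symm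

lemma traceNorm_eq_sqrt (c : Matrix m m ℂ) :
    traceNorm c = ((Matrix.posSemidef_self_mul_conjTranspose c).sqrt.trace).re := by
  rw [traceNorm, Matrix.PosSemidef.sqrt,
    CFC.sqrt_eq_real_sqrt _ (Matrix.posSemidef_self_mul_conjTranspose c).nonneg,
    cfcₙ_eq_cfc (hf0 := Real.sqrt_zero),
    (Matrix.posSemidef_self_mul_conjTranspose c).1.cfc_eq, IsHermitian.cfc,
    Unitary.conjStarAlgAut_apply]
  rfl

lemma spec_helper {X : Matrix m m ℂ} (hX : X.IsHermitian) :
    X = (hX.eigenvectorUnitary : Matrix m m ℂ) * diagonal (fun i => ((hX.eigenvalues i : ℝ) : ℂ))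
      * (hX.eigenvectorUnitary : Matrix m m ℂ)ᴴ := by
  have h := hX.spectral_theorem
  rw [Unitary.conjStarAlgAut_apply] at h
  exact h

lemma traceNorm_eq_of_sq {A S : Matrix m m ℂ} (hS : S.PosSemidef)
    (h : S ^ 2 = A * Aᴴ) : traceNorm A = S.trace.re := by
  rw [traceNorm_eq_sqrt, ← hS.eq_sqrt_of_sq_eq _ h]

lemma diag_coe_mul (f g : m → ℝ) :
    (diagonal (fun i => (f i : ℂ))) * (diagonal fun i => (g i : ℂ)) =
      diagonal (fun i => ((f i * g i : ℝ) : ℂ)) := by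
  rw [diagonal_mul_diagonal]
  exact congrArg diagonal (funext fun i => by push_cast; ring)

lemma diag_coe_conjTranspose (f : m → ℝ) :
    (diagonal fun i => ((f i : ℝ) : ℂ))ᴴ = diagonal fun i => ((f i : ℝ) : ℂ) := by
  rw [diagonal_conjTranspose]
  exact congrArg diagonal (funext fun i => by simp)

lemma psd_mul_diag_mul_conjTranspose (B : Matrix m m ℂ) {f : m → ℝ} (hf : ∀ i, 0 ≤ f i) :
    (B * diagonal (fun i => (f i : ℂ)) * Bᴴ).PosSemidef := by
  have h1 : diagonal (fun i => (f i : ℂ)) =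
      (diagonal fun i => ((Real.sqrt (f i) : ℝ) : ℂ)) * diagonal (fun i => ((Real.sqrt (f i) : ℝ) : ℂ)) := by
    rw [diag_coe_mul]
    exact congrArg diagonal (funext fun i => by rw [Real.mul_self_sqrt (hf i)])
  have : B * diagonal (fun i => (f i : ℂ)) * Bᴴ
      = ((diagonal fun i => ((Real.sqrt (f i) : ℝ) : ℂ)) * Bᴴ)ᴴ * ((diagonal fun i => ((Real.sqrt (f i) : ℝ) : ℂ)) * Bᴴ) := by
    rw [conjTranspose_mul, diag_coe_conjTranspose, conjTranspose_conjTranspose, h1]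
    noncomm_ring
  rw [this]
  exact posSemidef_conjTranspose_mul_self _

lemma traceNorm_conjTranspose (A : Matrix m m ℂ) : traceNorm Aᴴ = traceNorm A := by
  have hM := Matrix.posSemidef_conjTranspose_mul_self A
  set V : Matrix m m ℂ := (hM.1.eigenvectorUnitary : Matrix m m ℂ) with hV
  set lam := hM.1.eigenvalues with hlam
  have hlam0 : ∀ i, 0 ≤ lam i := hM.eigenvalues_nonneg
  have hspec : Aᴴ * A = V * diagonal (fun i => ((lam i : ℝ) : ℂ)) * Vᴴ := by
    exact spec_helper hM.1
  have hVV : Vᴴ * V = 1 := by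
    rw [← Matrix.star_eq_conjTranspose]
    exact Unitary.coe_star_mul_self hM.1.eigenvectorUnitary
  have hVV' : V * Vᴴ = 1 := by
    rw [← Matrix.star_eq_conjTranspose]
    exact Unitary.coe_mul_star_self hM.1.eigenvectorUnitary
  -- part 1: traceNorm Aᴴ = ∑ √(lam i)
  have hS'sq : (V * diagonal (fun i => ((Real.sqrt (lam i) : ℝ) : ℂ)) * Vᴴ)^2 = Aᴴ * (Aᴴ)ᴴ := by
    rw [conjTranspose_conjTranspose, hspec, pow_two]
    have h3 : (V * diagonal (fun i => ((Real.sqrt (lam i) : ℝ) : ℂ)) * Vᴴ) * (V * diagonal (fun i => ((Real.sqrt (lam i) : ℝ) : ℂ)) * Vᴴ)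
        = V * (diagonal (fun i => ((Real.sqrt (lam i) : ℝ) : ℂ)) * (Vᴴ * V) * diagonal (fun i => ((Real.sqrt (lam i) : ℝ) : ℂ))) * Vᴴ := by
      noncomm_ring
    rw [h3, hVV, mul_one, diag_coe_mul]
    congr 2
    exact congrArg diagonal (funext fun i => by rw [Real.mul_self_sqrt (hlam0 i)])
  have h1 : traceNorm Aᴴ = ∑ i, Real.sqrt (lam i) := by
    rw [traceNorm_eq_of_sq (psd_mul_diag_mul_conjTranspose V (fun i => Real.sqrt_nonneg _)) hS'sq]
    rw [Matrix.trace_mul_cycle, hVV, one_mul, trace_diagonal]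
    rw [Complex.re_sum]
    exact Finset.sum_congr rfl fun i _ => Complex.ofReal_re _
  -- part 2: traceNorm A = ∑ √(lam i)
  set W := A * V with hW
  have hWW : Wᴴ * W = diagonal (fun i => ((lam i : ℝ) : ℂ)) := by
    rw [hW, conjTranspose_mul]
    have h4 : Vᴴ * Aᴴ * (A * V) = Vᴴ * (Aᴴ * A) * V := by noncomm_ring
    rw [h4, hspec]
    have h5 : Vᴴ * (V * diagonal (fun i => ((lam i : ℝ) : ℂ)) * Vᴴ) * V
        = (Vᴴ * V) * diagonal (fun i => ((lam i : ℝ) : ℂ)) * (Vᴴ * V) := by noncomm_ring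
    rw [h5, hVV, one_mul, mul_one]
  have hWcol : ∀ i, lam i = 0 → ∀ k, W k i = 0 := by
    intro i hi k
    have h6 : (Wᴴ * W) i i = ((lam i : ℝ) : ℂ) := by rw [hWW, diagonal_apply_eq]
    have h7 : (Wᴴ * W) i i = ∑ j, Complex.normSq (W j i) := by
      simp [Matrix.mul_apply, conjTranspose_apply, Complex.normSq_eq_conj_mul_self]
    rw [h6, hi] at h7
    have h8 : ∑ j, Complex.normSq (W j i) = 0 := by
      have := h7.symm
      exact_mod_cast congrArg Complex.re this
    have h9 := (Finset.sum_eq_zero_iff_of_nonneg (fun j _ => Complex.normSq_nonneg _)).mp h8 k (Finset.mem_univ k)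
    exact Complex.normSq_eq_zero.mp h9
  set g : m → ℝ := fun i => (Real.sqrt (lam i))⁻¹ with hg
  have hSsq : (W * diagonal (fun i => ((g i : ℝ) : ℂ)) * Wᴴ)^2 = A * Aᴴ := by
    rw [pow_two]
    have h3 : (W * diagonal (fun i => ((g i : ℝ) : ℂ)) * Wᴴ) * (W * diagonal (fun i => ((g i : ℝ) : ℂ)) * Wᴴ)
        = W * (diagonal (fun i => ((g i : ℝ) : ℂ)) * (Wᴴ * W) * diagonal (fun i => ((g i : ℝ) : ℂ))) * Wᴴ := by
      noncomm_ring
    rw [h3, hWW, diag_coe_mul, diag_coe_mul]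
    have h10 : W * diagonal (fun i => ((g i * lam i * g i : ℝ) : ℂ)) * Wᴴ = W * Wᴴ := by
      have h11 : W * diagonal (fun i => ((g i * lam i * g i : ℝ) : ℂ)) = W := by
        ext k i
        rw [mul_diagonal]
        rcases eq_or_lt_of_le (hlam0 i) with h | h
        · rw [hWcol i h.symm k, zero_mul]
        · have : g i * lam i * g i = 1 := by
            rw [hg]
            have hs : Real.sqrt (lam i) ≠ 0 := ne_of_gt (Real.sqrt_pos.mpr h)
            field_simp
            rw [Real.sq_sqrt h.le]
          rw [this]
          simp
      rw [h11]
    rw [h10, hW, conjTranspose_mul]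
    have h12 : A * V * (Vᴴ * Aᴴ) = A * (V * Vᴴ) * Aᴴ := by noncomm_ring
    rw [h12, hVV', mul_one]
  have h2 : traceNorm A = ∑ i, Real.sqrt (lam i) := by
    rw [traceNorm_eq_of_sq (psd_mul_diag_mul_conjTranspose W (fun i => inv_nonneg.mpr (Real.sqrt_nonneg _))) hSsq]
    rw [Matrix.trace_mul_cycle, hWW, diag_coe_mul, trace_diagonal, Complex.re_sum]
    refine Finset.sum_congr rfl fun i _ => ?_
    rw [Complex.ofReal_re]
    rcases eq_or_lt_of_le (hlam0 i) with h | h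
    · rw [← h]; simp [hg]
    · have hs : Real.sqrt (lam i) ≠ 0 := ne_of_gt (Real.sqrt_pos.mpr h)
      show lam i * (Real.sqrt (lam i))⁻¹ = Real.sqrt (lam i)
      field_simp
      rw [Real.sq_sqrt h.le]
  rw [h1, h2]

lemma trace_re_nonneg' {M : Matrix m m ℂ} (hM : M.PosSemidef) : 0 ≤ M.trace.re := by
  rw [Matrix.trace, Complex.re_sum]
  refine Finset.sum_nonneg fun i _ => ?_
  have := hM.diag_nonneg (i := i)
  exact (Complex.le_def.mp this).1

lemma traceNorm_nonneg (A : Matrix m m ℂ) : 0 ≤ traceNorm A :=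
  (traceNorm_eq_sqrt A).symm ▸ trace_re_nonneg' (Matrix.posSemidef_self_mul_conjTranspose A).posSemidef_sqrt

lemma traceNorm_psd {M : Matrix m m ℂ} (hM : M.PosSemidef) : traceNorm M = M.trace.re :=
  traceNorm_eq_of_sq hM (by rw [pow_two, hM.isHermitian.eq])

lemma traceNorm_neg (A : Matrix m m ℂ) : traceNorm (-A) = traceNorm A := by
  have h1 := traceNorm_eq_of_sq (A := -A)
    (Matrix.posSemidef_self_mul_conjTranspose A).posSemidef_sqrt
    (by rw [(Matrix.posSemidef_self_mul_conjTranspose A).sq_sqrt]; simp)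
  rw [h1, traceNorm_eq_sqrt]

lemma trace_mul_diag (B : Matrix m m ℂ) (d : m → ℂ) :
    (B * diagonal d).trace = ∑ i, B i i * d i := by
  simp [Matrix.trace, Matrix.diag, mul_diagonal]

lemma traceNorm_eq_sum_abs_eigenvalues {X : Matrix m m ℂ} (hX : X.IsHermitian) :
    traceNorm X = ∑ i, |hX.eigenvalues i| := by
  set lam := hX.eigenvalues with hlam
  set V : Matrix m m ℂ := (hX.eigenvectorUnitary : Matrix m m ℂ) with hV
  have hspec : X = V * diagonal (fun i => ((lam i : ℝ) : ℂ)) * Vᴴ := by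
    exact spec_helper hX
  have hVV : Vᴴ * V = 1 := by
    rw [← Matrix.star_eq_conjTranspose]
    exact Unitary.coe_star_mul_self hX.eigenvectorUnitary
  have hsq : (V * diagonal (fun i => ((|lam i| : ℝ) : ℂ)) * Vᴴ) ^ 2 = X * Xᴴ := by
    rw [hX.eq, pow_two]
    conv_rhs => rw [hspec]
    have h3 : (V * diagonal (fun i => ((|lam i| : ℝ) : ℂ)) * Vᴴ) * (V * diagonal (fun i => ((|lam i| : ℝ) : ℂ)) * Vᴴ)
        = V * (diagonal (fun i => ((|lam i| : ℝ) : ℂ)) * (Vᴴ * V) * diagonal (fun i => ((|lam i| : ℝ) : ℂ))) * Vᴴ := by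
      noncomm_ring
    have h4 : (V * diagonal (fun i => ((lam i : ℝ) : ℂ)) * Vᴴ) * (V * diagonal (fun i => ((lam i : ℝ) : ℂ)) * Vᴴ)
        = V * (diagonal (fun i => ((lam i : ℝ) : ℂ)) * (Vᴴ * V) * diagonal (fun i => ((lam i : ℝ) : ℂ))) * Vᴴ := by
      noncomm_ring
    rw [h3, h4, hVV, mul_one, mul_one, diag_coe_mul, diag_coe_mul]
    congr 2
    exact congrArg diagonal (funext fun i => by rw [abs_mul_abs_self])
  rw [traceNorm_eq_of_sq (psd_mul_diag_mul_conjTranspose V (fun i => abs_nonneg _)) hsq]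
  rw [Matrix.trace_mul_cycle, hVV, one_mul, trace_diagonal, Complex.re_sum]
  exact Finset.sum_congr rfl fun i _ => Complex.ofReal_re _

lemma key_bound {X : Matrix m m ℂ} (hX : X.IsHermitian) (V' : Matrix m m ℂ)
    (hV'1 : V'ᴴ * V' = 1) (hV'2 : V' * V'ᴴ = 1) (s : m → ℝ) (hs : ∀ i, |s i| ≤ 1) :
    ((V' * diagonal (fun i => (s i : ℂ)) * V'ᴴ * X).trace).re ≤ traceNorm X := by
  set lam := hX.eigenvalues with hlam
  set V : Matrix m m ℂ := (hX.eigenvectorUnitary : Matrix m m ℂ) with hV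
  have hspec : X = V * diagonal (fun i => ((lam i : ℝ) : ℂ)) * Vᴴ := by
    exact spec_helper hX
  have hVV : Vᴴ * V = 1 := by
    rw [← Matrix.star_eq_conjTranspose]
    exact Unitary.coe_star_mul_self hX.eigenvectorUnitary
  set U : Matrix m m ℂ := V'ᴴ * V with hU
  have hUU : Uᴴ * U = 1 := by
    rw [hU, conjTranspose_mul, conjTranspose_conjTranspose]
    have : Vᴴ * V' * (V'ᴴ * V) = Vᴴ * (V' * V'ᴴ) * V := by noncomm_ring
    rw [this, hV'2, mul_one, hVV]
  have hcol : ∀ i, ∑ j, Complex.normSq (U j i) = 1 := by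
    intro i
    have h1 : (Uᴴ * U) i i = 1 := by rw [hUU]; simp
    have h2 : (Uᴴ * U) i i = ((∑ j, Complex.normSq (U j i) : ℝ) : ℂ) := by
      push_cast
      simp [Matrix.mul_apply, conjTranspose_apply, Complex.normSq_eq_conj_mul_self]
    rw [h2] at h1
    exact_mod_cast h1
  have htr : ((V' * diagonal (fun i => (s i : ℂ)) * V'ᴴ) * X).trace
      = ((Uᴴ * diagonal (fun i => (s i : ℂ)) * U) * diagonal (fun i => ((lam i : ℝ) : ℂ))).trace := by
    conv_lhs => rw [hspec]
    rw [show (V' * diagonal (fun i => (s i : ℂ)) * V'ᴴ) * (V * diagonal (fun i => ((lam i : ℝ) : ℂ)) * Vᴴ)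
        = ((V' * diagonal (fun i => (s i : ℂ)) * V'ᴴ) * V * diagonal (fun i => ((lam i : ℝ) : ℂ))) * Vᴴ from by noncomm_ring]
    rw [Matrix.trace_mul_comm]
    congr 1
    rw [hU, conjTranspose_mul, conjTranspose_conjTranspose]
    noncomm_ring
  have hMii : ∀ i, ((Uᴴ * diagonal (fun j => (s j : ℂ)) * U) i i) = ((∑ j, s j * Complex.normSq (U j i) : ℝ) : ℂ) := by
    intro i
    push_cast
    rw [Matrix.mul_apply]
    refine Finset.sum_congr rfl fun j _ => ?_
    rw [mul_diagonal, conjTranspose_apply, Complex.star_def, Complex.normSq_eq_conj_mul_self]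
    ring
  have hr : ∀ i, |∑ j, s j * Complex.normSq (U j i)| ≤ 1 := by
    intro i
    calc |∑ j, s j * Complex.normSq (U j i)| ≤ ∑ j, |s j * Complex.normSq (U j i)| :=
          Finset.abs_sum_le_sum_abs _ _
      _ ≤ ∑ j, Complex.normSq (U j i) := by
          refine Finset.sum_le_sum fun j _ => ?_
          rw [abs_mul, abs_of_nonneg (Complex.normSq_nonneg _)]
          exact mul_le_of_le_one_left (Complex.normSq_nonneg _) (hs j)
      _ = 1 := hcol i
  rw [htr, trace_mul_diag, Complex.re_sum]
  calc ∑ i, ((Uᴴ * diagonal (fun j => (s j : ℂ)) * U) i i * ((lam i : ℝ) : ℂ)).re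
      ≤ ∑ i, |lam i| := by
        refine Finset.sum_le_sum fun i _ => ?_
        rw [hMii i, ← Complex.ofReal_mul, Complex.ofReal_re]
        calc (∑ j, s j * Complex.normSq (U j i)) * lam i
            ≤ |(∑ j, s j * Complex.normSq (U j i)) * lam i| := le_abs_self _
          _ = |∑ j, s j * Complex.normSq (U j i)| * |lam i| := abs_mul _ _
          _ ≤ 1 * |lam i| := by
              exact mul_le_mul_of_nonneg_right (hr i) (abs_nonneg _)
          _ = |lam i| := one_mul _
    _ = traceNorm X := (traceNorm_eq_sum_abs_eigenvalues hX).symm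

lemma traceNorm_add_le_herm {X Y : Matrix m m ℂ} (hX : X.IsHermitian) (hY : Y.IsHermitian) :
    traceNorm (X + Y) ≤ traceNorm X + traceNorm Y := by
  have hZ : (X + Y).IsHermitian := hX.add hY
  set lam := hZ.eigenvalues with hlam
  set V : Matrix m m ℂ := (hZ.eigenvectorUnitary : Matrix m m ℂ) with hV
  have hspec : X + Y = V * diagonal (fun i => ((lam i : ℝ) : ℂ)) * Vᴴ := by
    exact spec_helper hZ
  have hVV : Vᴴ * V = 1 := by
    rw [← Matrix.star_eq_conjTranspose]
    exact Unitary.coe_star_mul_self hZ.eigenvectorUnitary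
  have hVV' : V * Vᴴ = 1 := by
    rw [← Matrix.star_eq_conjTranspose]
    exact Unitary.coe_mul_star_self hZ.eigenvectorUnitary
  set s : m → ℝ := fun i => if lam i < 0 then -1 else 1 with hsdef
  have hs : ∀ i, |s i| ≤ 1 := by
    intro i; rw [hsdef]; dsimp only; split <;> simp
  have hCX : ((V * diagonal (fun i => (s i : ℂ)) * Vᴴ) * (X + Y)).trace.re = traceNorm (X + Y) := by
    conv_lhs => rw [hspec]
    rw [show (V * diagonal (fun i => (s i : ℂ)) * Vᴴ) * (V * diagonal (fun i => ((lam i : ℝ) : ℂ)) * Vᴴ)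
        = V * (diagonal (fun i => (s i : ℂ)) * (Vᴴ * V) * diagonal (fun i => ((lam i : ℝ) : ℂ))) * Vᴴ from by noncomm_ring]
    rw [hVV, mul_one, diag_coe_mul]
    rw [Matrix.trace_mul_cycle, hVV, one_mul, trace_diagonal, Complex.re_sum]
    rw [traceNorm_eq_sum_abs_eigenvalues hZ]
    refine Finset.sum_congr rfl fun i _ => ?_
    rw [Complex.ofReal_re]
    rw [hsdef]; dsimp only
    rcases lt_or_ge (lam i) 0 with h | h
    · rw [if_pos h, abs_of_neg h]; ring
    · rw [if_neg (not_lt.mpr h), abs_of_nonneg h]; ring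
  have hsplit : ((V * diagonal (fun i => (s i : ℂ)) * Vᴴ) * (X + Y)).trace.re
      = ((V * diagonal (fun i => (s i : ℂ)) * Vᴴ) * X).trace.re
        + ((V * diagonal (fun i => (s i : ℂ)) * Vᴴ) * Y).trace.re := by
    rw [mul_add, trace_add, Complex.add_re]
  have b1 := key_bound hX V hVV hVV' s hs
  have b2 := key_bound hY V hVV hVV' s hs
  rw [← hCX, hsplit]
  exact add_le_add b1 b2

lemma trace_fromBlocks' (A : Matrix m m ℂ) (B C : Matrix m m ℂ) (D : Matrix m m ℂ) :
    (fromBlocks A B C D).trace = A.trace + D.trace := by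
  simp [Matrix.trace, Fintype.sum_sum_type, Matrix.diag]

lemma isHermitian_dilation (A : Matrix m m ℂ) :
    (fromBlocks 0 A Aᴴ (0 : Matrix m m ℂ)).IsHermitian := by
  unfold Matrix.IsHermitian
  rw [fromBlocks_conjTranspose]
  simp

lemma traceNorm_dilation (A : Matrix m m ℂ) :
    traceNorm (fromBlocks 0 A Aᴴ (0 : Matrix m m ℂ)) = 2 * traceNorm A := by
  have h1 := Matrix.posSemidef_self_mul_conjTranspose A
  have h2 := Matrix.posSemidef_self_mul_conjTranspose Aᴴ
  obtain ⟨B₁, hB₁⟩ := CStarAlgebra.nonneg_iff_eq_star_mul_self.mp h1.posSemidef_sqrt.nonneg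
  obtain ⟨B₂, hB₂⟩ := CStarAlgebra.nonneg_iff_eq_star_mul_self.mp h2.posSemidef_sqrt.nonneg
  have hSpsd : (fromBlocks h1.sqrt 0 0 h2.sqrt).PosSemidef := by
    have : fromBlocks h1.sqrt 0 0 h2.sqrt
        = (fromBlocks B₁ 0 0 B₂)ᴴ * (fromBlocks B₁ 0 0 B₂) := by
      rw [fromBlocks_conjTranspose, fromBlocks_multiply]
      simp [hB₁, hB₂, Matrix.star_eq_conjTranspose]
    rw [this]
    exact posSemidef_conjTranspose_mul_self _
  have hSsq : (fromBlocks h1.sqrt 0 0 h2.sqrt) ^ 2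
      = (fromBlocks 0 A Aᴴ (0 : Matrix m m ℂ)) * (fromBlocks 0 A Aᴴ (0 : Matrix m m ℂ))ᴴ := by
    rw [pow_two, fromBlocks_multiply, fromBlocks_conjTranspose, fromBlocks_multiply]
    simp only [Matrix.mul_zero, Matrix.zero_mul, add_zero, zero_add,
      conjTranspose_zero, conjTranspose_conjTranspose]
    rw [show h1.sqrt * h1.sqrt = A * Aᴴ from by rw [← pow_two, h1.sq_sqrt],
      show h2.sqrt * h2.sqrt = Aᴴ * A from by rw [← pow_two, h2.sq_sqrt, conjTranspose_conjTranspose]]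
  rw [traceNorm_eq_of_sq hSpsd hSsq, trace_fromBlocks', Complex.add_re]
  have e1 : (h1.sqrt.trace).re = traceNorm A := (traceNorm_eq_sqrt _).symm
  have e2 : (h2.sqrt.trace).re = traceNorm Aᴴ := (traceNorm_eq_sqrt _).symm
  rw [e1, e2, traceNorm_conjTranspose]
  ring

lemma traceNorm_add_le (A B : Matrix m m ℂ) :
    traceNorm (A + B) ≤ traceNorm A + traceNorm B := by
  have hsum : fromBlocks 0 (A + B) (A + B)ᴴ (0 : Matrix m m ℂ)
      = fromBlocks 0 A Aᴴ (0 : Matrix m m ℂ) + fromBlocks 0 B Bᴴ (0 : Matrix m m ℂ) := by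
    rw [fromBlocks_add, conjTranspose_add]
    simp
  have key := traceNorm_add_le_herm (isHermitian_dilation A) (isHermitian_dilation B)
  rw [← hsum, traceNorm_dilation, traceNorm_dilation, traceNorm_dilation] at key
  linarith

lemma posSemidef_coe_smul {M : Matrix m m ℂ} (hM : M.PosSemidef) {r : ℝ} (hr : 0 ≤ r) :
    (((r : ℂ)) • M).PosSemidef := by
  exact hM.smul (Complex.zero_le_real.mpr hr)

lemma traceNorm_coe_smul (A : Matrix m m ℂ) {r : ℝ} (hr : 0 ≤ r) :
    traceNorm ((r : ℂ) • A) = r * traceNorm A := by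
  have h1 := Matrix.posSemidef_self_mul_conjTranspose A
  have hS := posSemidef_coe_smul h1.posSemidef_sqrt hr
  have hsq : ((r : ℂ) • h1.sqrt) ^ 2 = ((r : ℂ) • A) * ((r : ℂ) • A)ᴴ := by
    rw [conjTranspose_smul, smul_pow, h1.sq_sqrt, smul_mul_assoc, mul_smul_comm, smul_smul]
    have : star ((r : ℂ)) = (r : ℂ) := by simp
    rw [this, ← pow_two]
  rw [traceNorm_eq_of_sq hS hsq, trace_smul, smul_eq_mul, Complex.mul_re]
  simp only [Complex.ofReal_re, Complex.ofReal_im, zero_mul, sub_zero]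
  rw [traceNorm_eq_sqrt]

lemma real_smul_eq (r : ℝ) (A : Matrix m m ℂ) : r • A = (r : ℂ) • A := by
  ext i j
  simp [Complex.real_smul]

/-- For a density matrix `ρ̂` and an orthogonal projection `P`, with
`ε' := Tr((𝟙 − P) ρ̂) < 1`, `ρ := P ρ̂ P / (1 − ε')` and `c := P ρ̂ (𝟙 − P)`, one has
`‖ρ̂ − ρ‖_Tr ≤ 2‖c‖_Tr + 2ε'`. -/
theorem traceNorm_dist_renormalized_le
    (n : ℕ) (hn : 1 ≤ n)
    (ρhat : Matrix (Fin n) (Fin n) ℂ) (hρ : ρhat.PosSemidef) (hρtr : ρhat.trace = 1)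
    (P : Matrix (Fin n) (Fin n) ℂ) (hP : P.IsHermitian) (hP2 : P * P = P)
    (hε : (Matrix.trace ((1 - P) * ρhat)).re < 1) :
    traceNorm (ρhat - (1 - (Matrix.trace ((1 - P) * ρhat)).re)⁻¹ • (P * ρhat * P)) ≤
      2 * traceNorm (P * ρhat * (1 - P)) + 2 * (Matrix.trace ((1 - P) * ρhat)).re := by
  set Q : Matrix (Fin n) (Fin n) ℂ := 1 - P with hQdef
  set ε : ℝ := (Matrix.trace (Q * ρhat)).re with hεdef
  have hQH : Qᴴ = Q := by rw [hQdef, conjTranspose_sub, conjTranspose_one, hP.eq]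
  have hQ2 : Q * Q = Q := by
    rw [hQdef]
    have : (1 - P) * (1 - P) = 1 - P - (P - P * P) := by noncomm_ring
    rw [this, hP2]
    simp
  have hQρQ : (Q * ρhat * Q).PosSemidef := by
    have := hρ.mul_mul_conjTranspose_same Q
    rwa [hQH] at this
  have hPρP : (P * ρhat * P).PosSemidef := by
    have := hρ.mul_mul_conjTranspose_same P
    rwa [hP.eq] at this
  have htrQ : (Q * ρhat * Q).trace = (Q * ρhat).trace := by
    rw [Matrix.trace_mul_cycle, hQ2]
  have hε0 : 0 ≤ ε := by
    have h := trace_re_nonneg' hQρQ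
    rwa [htrQ, ← hεdef] at h
  have hε1 : ε < 1 := hε
  have h1ε : 0 < 1 - ε := by linarith
  have htrP : ((P * ρhat * P).trace).re = 1 - ε := by
    have e1 : (P * ρhat * P).trace = (P * ρhat).trace := by
      rw [Matrix.trace_mul_cycle, hP2]
    have e2 : P * ρhat = ρhat - Q * ρhat := by rw [hQdef]; noncomm_ring
    rw [e1, e2, trace_sub, Complex.sub_re, hρtr, ← hεdef]
    norm_num
  have hsum : P * ρhat * Q + Q * ρhat * P + Q * ρhat * Q = ρhat - P * ρhat * P := by
    rw [hQdef]; noncomm_ring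
  have hk : (1 - ε)⁻¹ = 1 + ε * (1 - ε)⁻¹ := by field_simp; ring
  have hdecomp : ρhat - (1 - ε)⁻¹ • (P * ρhat * P)
      = ((P * ρhat * Q + Q * ρhat * P) + Q * ρhat * Q) + (-(ε * (1 - ε)⁻¹)) • (P * ρhat * P) := by
    nth_rewrite 1 [hk]
    rw [show (P * ρhat * Q + Q * ρhat * P) + Q * ρhat * Q
        = P * ρhat * Q + Q * ρhat * P + Q * ρhat * Q from by abel, hsum, add_smul, one_smul,
      neg_smul]
    abel
  rw [hdecomp]
  have t1 := traceNorm_add_le ((P * ρhat * Q + Q * ρhat * P) + Q * ρhat * Q)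
    ((-(ε * (1 - ε)⁻¹)) • (P * ρhat * P))
  have t2 := traceNorm_add_le (P * ρhat * Q + Q * ρhat * P) (Q * ρhat * Q)
  have t3 := traceNorm_add_le (P * ρhat * Q) (Q * ρhat * P)
  have v1 : traceNorm (Q * ρhat * Q) = ε := by
    rw [traceNorm_psd hQρQ, htrQ, ← hεdef]
  have v2 : traceNorm (Q * ρhat * P) = traceNorm (P * ρhat * Q) := by
    have h : Q * ρhat * P = (P * ρhat * Q)ᴴ := by
      rw [conjTranspose_mul, conjTranspose_mul, hQH, hρ.1.eq, hP.eq]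
      noncomm_ring
    rw [h, traceNorm_conjTranspose]
  have v3 : traceNorm ((-(ε * (1 - ε)⁻¹)) • (P * ρhat * P)) = ε := by
    rw [real_smul_eq]
    have hc : ((-(ε * (1 - ε)⁻¹) : ℝ) : ℂ) • (P * ρhat * P)
        = -(((ε * (1 - ε)⁻¹ : ℝ) : ℂ) • (P * ρhat * P)) := by
      push_cast
      rw [neg_smul]
    rw [hc, traceNorm_neg, traceNorm_coe_smul _ (mul_nonneg hε0 (le_of_lt (inv_pos.mpr h1ε))),
      traceNorm_psd hPρP, htrP]
    field_simp
  linarith
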